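/- Let T and V be n×n complex matrices and t ∈ ℝ. Then lim_{n→∞} ( exp(−i T t/n) · exp(−i V t/n) )ⁿ = exp(−i(T+V)t), where exp denotes the matrix exponential. (The Trotter–Lie product formula underlying splitting schemes.) -/

import Mathlib

set_option linter.unusedSectionVars false
set_option linter.unreachableTactic false
set_option linter.unusedTactic false

open Filter

section Aux
open Filter NormedSpace
open scoped Nat

variable {A : Type*} [NormedRing A] [NormOneClass A] [NormedAlgebra ℂ A] [CompleteSpace A]

lemma aux_norm_exp_le (x : A) : ‖exp x‖ ≤ Real.exp ‖x‖ := by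
  rw [exp_eq_tsum ℂ]
  refine (norm_tsum_le_tsum_norm (norm_expSeries_summable' (𝕂 := ℂ) x)).trans ?_
  rw [Real.exp_eq_exp_ℝ, exp_eq_tsum_div]
  refine (norm_expSeries_summable' (𝕂 := ℂ) x).tsum_le_tsum (fun n => ?_)
    (expSeries_div_summable ‖x‖)
  rw [norm_smul, norm_inv]
  simp only [Complex.norm_natCast]
  rw [div_eq_inv_mul]
  gcongr
  exact norm_pow_le x n

lemma aux_exp_remainder (x : A) : ‖exp x - 1 - x‖ ≤ ‖x‖ ^ 2 * Real.exp ‖x‖ := by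
  have h := exp_series_hasSum_exp' (𝕂 := ℂ) x
  have h2 : HasSum (fun n : ℕ => (((n + 2)! : ℂ))⁻¹ • x ^ (n + 2)) (exp x - 1 - x) := by
    have h3 := (hasSum_nat_add_iff' (f := fun n : ℕ => ((n ! : ℂ))⁻¹ • x ^ n) 2).mpr h
    simpa [Finset.sum_range_succ, sub_sub] using h3
  rw [← h2.tsum_eq]
  have hsumm : Summable fun n : ℕ => ‖(((n + 2)! : ℂ))⁻¹ • x ^ (n + 2)‖ :=
    (summable_nat_add_iff 2).mpr (norm_expSeries_summable' (𝕂 := ℂ) x)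
  refine (norm_tsum_le_tsum_norm hsumm).trans ?_
  have hs2 : Summable fun n : ℕ => ‖x‖ ^ 2 * (‖x‖ ^ n / n !) :=
    (expSeries_div_summable ‖x‖).mul_left _
  refine le_trans (hsumm.tsum_le_tsum (fun n => ?_) hs2) ?_
  · rw [norm_smul, norm_inv]
    simp only [Complex.norm_natCast]
    calc ((n + 2)! : ℝ)⁻¹ * ‖x ^ (n + 2)‖ ≤ ((n !) : ℝ)⁻¹ * ‖x‖ ^ (n + 2) := by
          gcongr
          · omega
          · exact norm_pow_le x (n + 2)
      _ = ‖x‖ ^ 2 * (‖x‖ ^ n / n !) := by rw [pow_add]; ring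
  · rw [tsum_mul_left, Real.exp_eq_exp_ℝ, exp_eq_tsum_div]

lemma aux_pow_sub_pow (p q : A) (M : ℝ) (hM1 : 1 ≤ M)
    (hp : ‖p‖ ≤ M) (hq : ‖q‖ ≤ M) (k : ℕ) :
    ‖p ^ k - q ^ k‖ ≤ k * M ^ k * ‖p - q‖ := by
  induction k with
  | zero => simp
  | succ k ih =>
    have hid : p ^ (k + 1) - q ^ (k + 1) = p ^ k * (p - q) + (p ^ k - q ^ k) * q := by noncomm_ring
    have hM0 : (0:ℝ) ≤ M := le_trans zero_le_one hM1
    have hpk : ‖p ^ k‖ ≤ M ^ k := (norm_pow_le p k).trans (pow_le_pow_left₀ (norm_nonneg p) hp k)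
    have hMk : M ^ k ≤ M ^ (k + 1) := pow_le_pow_right₀ hM1 (Nat.le_succ k)
    calc ‖p ^ (k + 1) - q ^ (k + 1)‖
        ≤ ‖p ^ k * (p - q)‖ + ‖(p ^ k - q ^ k) * q‖ := by rw [hid]; exact norm_add_le _ _
      _ ≤ ‖p ^ k‖ * ‖p - q‖ + ‖p ^ k - q ^ k‖ * ‖q‖ :=
          add_le_add (norm_mul_le _ _) (norm_mul_le _ _)
      _ ≤ M ^ k * ‖p - q‖ + (k * M ^ k * ‖p - q‖) * M := by
          gcongr
      _ ≤ (k + 1 : ℕ) * M ^ (k + 1) * ‖p - q‖ := by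
          push_cast
          have h1 : M ^ k * ‖p - q‖ ≤ M ^ (k + 1) * ‖p - q‖ := by gcongr
          have h2 : (k : ℝ) * M ^ k * ‖p - q‖ * M = k * M ^ (k + 1) * ‖p - q‖ := by ring
          nlinarith [norm_nonneg (p - q)]

lemma trotter_general (X Y : A) :
    Tendsto (fun k : ℕ => (exp ((k : ℂ)⁻¹ • X) * exp ((k : ℂ)⁻¹ • Y)) ^ k) atTop
      (nhds (exp (X + Y))) := by
  rw [← tendsto_sub_nhds_zero_iff]
  set a := ‖X‖ with ha
  set b := ‖Y‖ with hb
  set C : ℝ := a * b + (1 + a) * (b ^ 2 * Real.exp b) + a ^ 2 * Real.exp a * Real.exp b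
      + (a + b) ^ 2 * Real.exp (a + b) with hC
  have ha0 : 0 ≤ a := norm_nonneg X
  have hb0 : 0 ≤ b := norm_nonneg Y
  have hC0 : 0 ≤ C := by positivity
  apply squeeze_zero_norm' (a := fun k : ℕ => Real.exp (a + b) * C / k)
  · filter_upwards [eventually_ge_atTop 1] with k hk
    have hk0 : (0 : ℝ) < k := by exact_mod_cast hk
    have hkc : (k : ℂ) ≠ 0 := Nat.cast_ne_zero.mpr (by omega)
    set x := (k : ℂ)⁻¹ • X with hx
    set y := (k : ℂ)⁻¹ • Y with hy
    have hxn : ‖x‖ = a / k := by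
      rw [hx, norm_smul, norm_inv, Complex.norm_natCast, div_eq_inv_mul]
    have hyn : ‖y‖ = b / k := by
      rw [hy, norm_smul, norm_inv, Complex.norm_natCast, div_eq_inv_mul]
    have hxa : ‖x‖ ≤ a := by rw [hxn]; exact div_le_self ha0 (by exact_mod_cast hk)
    have hyb : ‖y‖ ≤ b := by rw [hyn]; exact div_le_self hb0 (by exact_mod_cast hk)
    set p := exp x * exp y with hp
    set q := exp (x + y) with hq
    -- q ^ k = exp (X + Y)
    have hqk : q ^ k = exp (X + Y) := by
      letI : NormedAlgebra ℚ A := NormedAlgebra.restrictScalars ℚ ℂ A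
      rw [hq, ← exp_nsmul]
      congr 1
      rw [hx, hy, ← smul_add, ← Nat.cast_smul_eq_nsmul ℂ, smul_smul,
        mul_inv_cancel₀ hkc, one_smul]
    have hEx := aux_exp_remainder x
    have hEy := aux_exp_remainder y
    have hExy := aux_exp_remainder (x + y)
    have hxyn : ‖x + y‖ ≤ (a + b) / k := by
      refine (norm_add_le x y).trans ?_
      rw [hxn, hyn, add_div]
    have hk1 : (1 : ℝ) ≤ (k : ℝ) := by exact_mod_cast hk
    have hda : a / k ≤ a := div_le_self ha0 hk1
    have hdb : b / k ≤ b := div_le_self hb0 hk1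
    have hdab : (a + b) / k ≤ a + b := div_le_self (by positivity) hk1
    have hxyab : ‖x + y‖ ≤ a + b := hxyn.trans hdab
    have hkey : p - q = x * y + (1 + x) * (exp y - 1 - y) + (exp x - 1 - x) * exp y
        - (exp (x + y) - 1 - (x + y)) := by
      rw [hp, hq]; noncomm_ring
    have t1 : ‖x * y‖ ≤ a * b / k ^ 2 := by
      refine (norm_mul_le _ _).trans ?_
      rw [hxn, hyn]
      rw [div_mul_div_comm, sq]
    have t2 : ‖(1 + x) * (exp y - 1 - y)‖ ≤ (1 + a) * (b ^ 2 * Real.exp b) / k ^ 2 := by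
      refine (norm_mul_le _ _).trans ?_
      have h1x : ‖1 + x‖ ≤ 1 + a := by
        refine (norm_add_le 1 x).trans ?_
        rw [norm_one]; linarith
      have hEy' : ‖exp y - 1 - y‖ ≤ b ^ 2 * Real.exp b / k ^ 2 := by
        refine hEy.trans ?_
        rw [hyn, div_pow]
        calc b ^ 2 / (k : ℝ) ^ 2 * Real.exp (b / k)
            ≤ b ^ 2 / (k : ℝ) ^ 2 * Real.exp b := by
              gcongr <;>
              first
                | exact hda | exact hdb | exact hdab
                | exact Real.exp_le_exp.mpr hda | exact Real.exp_le_exp.mpr hdb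
                | exact Real.exp_le_exp.mpr hdab
                | exact hxyn | exact Real.exp_le_exp.mpr hxyab | exact norm_nonneg _
                | positivity | linarith
          _ = b ^ 2 * Real.exp b / k ^ 2 := by ring
      calc ‖1 + x‖ * ‖exp y - 1 - y‖ ≤ (1 + a) * (b ^ 2 * Real.exp b / k ^ 2) := by
            gcongr <;> first | assumption | positivity | linarith
          _ = (1 + a) * (b ^ 2 * Real.exp b) / k ^ 2 := by ring
    have t3 : ‖(exp x - 1 - x) * exp y‖ ≤ a ^ 2 * Real.exp a * Real.exp b / k ^ 2 := by
      refine (norm_mul_le _ _).trans ?_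
      have hEx' : ‖exp x - 1 - x‖ ≤ a ^ 2 * Real.exp a / k ^ 2 := by
        refine hEx.trans ?_
        rw [hxn, div_pow]
        calc a ^ 2 / (k : ℝ) ^ 2 * Real.exp (a / k)
            ≤ a ^ 2 / (k : ℝ) ^ 2 * Real.exp a := by
              gcongr <;>
              first
                | exact hda | exact hdb | exact hdab
                | exact Real.exp_le_exp.mpr hda | exact Real.exp_le_exp.mpr hdb
                | exact Real.exp_le_exp.mpr hdab
                | exact hxyn | exact Real.exp_le_exp.mpr hxyab | exact norm_nonneg _
                | positivity | linarith
          _ = a ^ 2 * Real.exp a / k ^ 2 := by ring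
      have hney : ‖exp y‖ ≤ Real.exp b := (aux_norm_exp_le y).trans (Real.exp_le_exp.mpr hyb)
      calc ‖exp x - 1 - x‖ * ‖exp y‖ ≤ (a ^ 2 * Real.exp a / k ^ 2) * Real.exp b := by
            gcongr <;> first | assumption | positivity | linarith
          _ = a ^ 2 * Real.exp a * Real.exp b / k ^ 2 := by ring
    have t4 : ‖exp (x + y) - 1 - (x + y)‖ ≤ (a + b) ^ 2 * Real.exp (a + b) / k ^ 2 := by
      refine hExy.trans ?_
      calc ‖x + y‖ ^ 2 * Real.exp ‖x + y‖
          ≤ ((a + b) / k) ^ 2 * Real.exp (a + b) := by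
            gcongr <;>
              first
                | exact hda | exact hdb | exact hdab
                | exact Real.exp_le_exp.mpr hda | exact Real.exp_le_exp.mpr hdb
                | exact Real.exp_le_exp.mpr hdab
                | exact hxyn | exact Real.exp_le_exp.mpr hxyab | exact norm_nonneg _
                | positivity | linarith
        _ = (a + b) ^ 2 * Real.exp (a + b) / k ^ 2 := by rw [div_pow]; ring
    have hpq : ‖p - q‖ ≤ C / k ^ 2 := by
      rw [hkey]
      calc ‖x * y + (1 + x) * (exp y - 1 - y) + (exp x - 1 - x) * exp y
              - (exp (x + y) - 1 - (x + y))‖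
          ≤ ‖x * y + (1 + x) * (exp y - 1 - y) + (exp x - 1 - x) * exp y‖
              + ‖exp (x + y) - 1 - (x + y)‖ := norm_sub_le _ _
        _ ≤ ‖x * y‖ + ‖(1 + x) * (exp y - 1 - y)‖ + ‖(exp x - 1 - x) * exp y‖
              + ‖exp (x + y) - 1 - (x + y)‖ := by
            have := norm_add₃_le (a := x * y) (b := (1 + x) * (exp y - 1 - y))
              (c := (exp x - 1 - x) * exp y)
            linarith
        _ ≤ C / k ^ 2 := by
            have hsum : a * b / (k : ℝ) ^ 2 + (1 + a) * (b ^ 2 * Real.exp b) / k ^ 2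
                + a ^ 2 * Real.exp a * Real.exp b / k ^ 2
                + (a + b) ^ 2 * Real.exp (a + b) / k ^ 2 = C / k ^ 2 := by rw [hC]; ring
            linarith
    set M := Real.exp ((a + b) / k) with hM
    have hM1 : 1 ≤ M := Real.one_le_exp (by positivity)
    have hpM : ‖p‖ ≤ M := by
      refine (norm_mul_le _ _).trans ?_
      calc ‖exp x‖ * ‖exp y‖
          ≤ Real.exp (a / k) * Real.exp (b / k) := by
            gcongr
            · exact (aux_norm_exp_le x).trans (Real.exp_le_exp.mpr (le_of_eq hxn))
            · exact (aux_norm_exp_le y).trans (Real.exp_le_exp.mpr (le_of_eq hyn))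
        _ = M := by rw [hM, ← Real.exp_add, add_div]
    have hqM : ‖q‖ ≤ M := (aux_norm_exp_le (x + y)).trans (Real.exp_le_exp.mpr hxyn)
    have hMk : M ^ k = Real.exp (a + b) := by
      rw [hM, ← Real.exp_nat_mul]
      congr 1
      field_simp
    calc ‖p ^ k - exp (X + Y)‖ = ‖p ^ k - q ^ k‖ := by rw [hqk]
      _ ≤ k * M ^ k * ‖p - q‖ := aux_pow_sub_pow p q M hM1 hpM hqM k
      _ ≤ k * Real.exp (a + b) * (C / k ^ 2) := by
          rw [hMk]
          gcongr
      _ = Real.exp (a + b) * C / k := by field_simp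
  · exact tendsto_const_div_atTop_nhds_zero_nat _

end Aux

theorem trotter_product_formula_matrices
    (d : ℕ) (T V : Matrix (Fin d) (Fin d) ℂ) (t : ℝ) :
    Tendsto
      (fun k : ℕ =>
        (NormedSpace.exp ((-(Complex.I * t / k)) • T) *
            NormedSpace.exp ((-(Complex.I * t / k)) • V)) ^ k)
      atTop
      (nhds (NormedSpace.exp ((-(Complex.I * t)) • (T + V)))) := by
  rcases Nat.eq_zero_or_pos d with rfl | hd
  · have hsub : Subsingleton (Matrix (Fin 0) (Fin 0) ℂ) :=
      ⟨fun M N => by ext i; exact i.elim0⟩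
    exact tendsto_const_nhds.congr fun k => Subsingleton.elim _ _
  · letI : SeminormedRing (Matrix (Fin d) (Fin d) ℂ) := Matrix.linftyOpSemiNormedRing
    letI : NormedRing (Matrix (Fin d) (Fin d) ℂ) := Matrix.linftyOpNormedRing
    letI : NormedAlgebra ℂ (Matrix (Fin d) (Fin d) ℂ) := Matrix.linftyOpNormedAlgebra
    haveI : Nonempty (Fin d) := ⟨⟨0, hd⟩⟩
    haveI : NormOneClass (Matrix (Fin d) (Fin d) ℂ) := Matrix.linfty_opNormOneClass
    have harg : ∀ (k : ℕ) (M : Matrix (Fin d) (Fin d) ℂ),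
        (k : ℂ)⁻¹ • ((-(Complex.I * t)) • M) = (-(Complex.I * t / k)) • M := by
      intro k M
      rw [smul_smul]
      congr 1
      ring
    have key := trotter_general ((-(Complex.I * t)) • T) ((-(Complex.I * t)) • V)
    rw [← smul_add] at key
    simp only [harg] at key
    exact key
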